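/- arXiv:1506.09168 — 2 statements merged into one kernel-verified Lean document; each statement's English description precedes it below -/
import Mathlib

section
/- Let (R,m,k) be a one-dimensional Cohen–Macaulay local ring and let x ∈ m be a non zero-divisor with ord(x) = d (i.e., x ∈ m^d \ m^{d+1}). Then the length of R/(x) satisfies λ(R/(x)) ≥ d·e(R), where e(R) is the Hilbert–Samuel multiplicity of R with respect to m. -/
open IsLocalRing

universe u v

/-- The length of a module, as the Krull dimension of its lattice of submodules. -/
noncomputable def mLength (R : Type u) (M : Type v) [CommRing R] [AddCommGroup M]
    [Module R M] : WithBot ℕ∞ :=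
  Order.krullDim (Submodule R M)

/-- The quotient `I/J` of two ideals (i.e. `I/(I ⊓ J)`), as an `R`-module. -/
abbrev idealQuot {R : Type u} [CommRing R] (I J : Ideal R) :=
  I ⧸ (Submodule.comap I.subtype J)

/-- A finitely generated module is maximal Cohen–Macaulay if it admits a regular sequence,
contained in the maximal ideal, of length equal to the Krull dimension of the ring. -/
def IsMCM (R : Type u) (M : Type v) [CommRing R] [IsLocalRing R] [AddCommGroup M]
    [Module R M] : Prop :=
  ∃ rs : List R, (∀ r ∈ rs, r ∈ maximalIdeal R) ∧ RingTheory.Sequence.IsRegular M rs ∧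
    (rs.length : WithBot ℕ∞) = ringKrullDim R

/-- A local ring is Cohen–Macaulay if it is maximal Cohen–Macaulay as a module over itself. -/
def IsCMLocalRing (R : Type u) [CommRing R] [IsLocalRing R] : Prop :=
  IsMCM R R

/-- A local ring is Gorenstein if it is Cohen–Macaulay and the socle of the quotient by any
maximal regular sequence is a one-dimensional vector space over the residue field. -/
def IsGorensteinLocalRing (R : Type u) [CommRing R] [IsLocalRing R] : Prop :=
  IsCMLocalRing R ∧ ∀ rs : List R, (∀ r ∈ rs, r ∈ maximalIdeal R) →
    RingTheory.Sequence.IsRegular R rs → (rs.length : WithBot ℕ∞) = ringKrullDim R →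
    mLength R (idealQuot ((Ideal.ofList rs).colon (maximalIdeal R)) (Ideal.ofList rs)) = 1

/-- The free rank of a module: the largest `n` such that `R^n` splits off as a direct summand. -/
noncomputable def freeRank (R : Type u) (M : Type v) [CommRing R] [AddCommGroup M]
    [Module R M] : ℕ :=
  sSup {n : ℕ | ∃ (f : M →ₗ[R] (Fin n → R)) (g : (Fin n → R) →ₗ[R] M),
    f ∘ₗ g = LinearMap.id}

/-- Auslander's delta invariant: the minimal free rank of a maximal Cohen–Macaulay module
admitting a surjection onto `M`. -/
noncomputable def auslanderDelta (R : Type u) [CommRing R] [IsLocalRing R]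
    (M : Type v) [AddCommGroup M] [Module R M] : ℕ :=
  sInf {r : ℕ | ∃ X : ModuleCat.{u} R, Module.Finite R X ∧ IsMCM R X ∧
    (∃ φ : X →ₗ[R] M, Function.Surjective φ) ∧ freeRank R X = r}

/-- The minimal number of generators of a module. -/
noncomputable def minGens (R : Type u) (M : Type v) [CommRing R] [AddCommGroup M]
    [Module R M] : ℕ :=
  sInf {n : ℕ | ∃ f : (Fin n → R) →ₗ[R] M, Function.Surjective f}

/-- The index of a local ring: the least `n` with `δ(R/m^n) = 1`. -/
noncomputable def ringIndex (R : Type u) [CommRing R] [IsLocalRing R] : ℕ∞ :=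
  sInf ((fun n : ℕ => (n : ℕ∞)) ''
    {n : ℕ | auslanderDelta R (R ⧸ (maximalIdeal R ^ n)) = 1})

/-- The generalized Löwy length of a local ring: the least `n` such that `m^n ⊆ (x₁,…,x_d)`
for some system of parameters `x₁,…,x_d`. -/
noncomputable def gll (R : Type u) [CommRing R] [IsLocalRing R] : ℕ∞ :=
  sInf ((fun n : ℕ => (n : ℕ∞)) ''
    {n : ℕ | ∃ rs : List R, (∀ r ∈ rs, r ∈ maximalIdeal R) ∧
      (rs.length : WithBot ℕ∞) = ringKrullDim R ∧
      maximalIdeal R ^ n ≤ Ideal.ofList rs})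


section Aux

open Order

/-- From a finite Krull dimension bound, extract a long chain. -/
lemma exists_ltSeries_of_krullDim_eq_coe {α : Type*} [Preorder α] [Nonempty α] {e : ℕ}
    (h : Order.krullDim α = ((e : ℕ∞) : WithBot ℕ∞)) :
    ∃ p : LTSeries α, e ≤ p.length := by
  by_contra hcon
  push_neg at hcon
  have hbound : ∀ p : LTSeries α, (p.length : ℕ∞) ≤ ((e - 1 : ℕ) : ℕ∞) := by
    intro p
    have h1 := hcon p
    have h2 := hcon (RelSeries.singleton _ (Nonempty.some inferInstance))
    simp only [RelSeries.singleton_length] at h2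
    exact_mod_cast Nat.le_sub_one_of_lt h1
  have heq : (⨆ p : LTSeries α, (p.length : ℕ∞)) = (e : ℕ∞) := by
    have := Order.krullDim_eq_iSup_length (α := α)
    rw [h] at this
    exact_mod_cast this.symm
  have h3 : (e : ℕ∞) ≤ ((e - 1 : ℕ) : ℕ∞) := by
    rw [← heq]
    exact iSup_le fun p => hbound p
  have h4 : e ≤ e - 1 := by exact_mod_cast h3
  have h5 : 0 < e := by
    rcases Nat.eq_zero_or_pos e with h | h
    · subst h
      exact absurd (hcon (RelSeries.singleton _ (Nonempty.some inferInstance))) (by simp)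
    · exact h
  omega

/-- Extend a chain in a bounded order so that it starts at `⊥` and ends at `⊤`. -/
lemma exists_ltSeries_bot_top {α : Type*} [PartialOrder α] [BoundedOrder α] (p : LTSeries α) :
    ∃ q : LTSeries α, q.head = ⊥ ∧ q.last = ⊤ ∧ p.length ≤ q.length := by
  obtain ⟨q, hq1, hq2, hq3⟩ : ∃ q : LTSeries α, q.head = p.head ∧ q.last = ⊤ ∧
      p.length ≤ q.length := by
    by_cases hl : p.last = ⊤
    · exact ⟨p, rfl, hl, le_rfl⟩
    · refine ⟨p.snoc ⊤ (lt_top_iff_ne_top.mpr hl), ?_, ?_, ?_⟩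
      · simp
      · simp
      · exact (show p.length ≤ p.length + 0 + 1 by omega)
  by_cases hh : p.head = ⊥
  · exact ⟨q, hq1.trans hh, hq2, hq3⟩
  · refine ⟨q.cons ⊥ ?_, ?_, ?_, ?_⟩
    · rw [hq1]
      exact Ne.bot_lt hh
    · simp
    · simpa [RelSeries.last_cons]
    · show p.length ≤ 0 + q.length + 1
      omega

variable {R : Type u} [CommRing R]

/-- A chain of length `e` between powers of ideals from the length of the quotient. -/
lemma exists_ideal_chain_of_mLength {I J : Ideal R} (hJI : J ≤ I) {e : ℕ}
    (h : mLength R (idealQuot I J) = ((e : ℕ∞) : WithBot ℕ∞)) :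
    ∃ p : LTSeries (Ideal R), p.head = J ∧ p.last = I ∧ e ≤ p.length := by
  obtain ⟨p0, hp0⟩ := exists_ltSeries_of_krullDim_eq_coe (h := h)
  obtain ⟨q, hq1, hq2, hq3⟩ := exists_ltSeries_bot_top p0
  set N : Submodule R I := Submodule.comap I.subtype J with hN
  have hstrict : StrictMono (fun s : Submodule R (idealQuot I J) =>
      Submodule.map I.subtype (Submodule.comap N.mkQ s)) := by
    intro a b hab
    exact (Submodule.MapSubtype.orderEmbedding I).strictMono
      ((Submodule.comapMkQOrderEmbedding N).strictMono hab)
  refine ⟨q.map _ hstrict, ?_, ?_, ?_⟩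
  · rw [LTSeries.head_map, hq1]
    show Submodule.map I.subtype (Submodule.comap N.mkQ ⊥) = J
    rw [Submodule.comap_bot, Submodule.ker_mkQ, hN, Submodule.map_comap_subtype,
      inf_eq_right.mpr hJI]
  · rw [LTSeries.last_map, hq2]
    show Submodule.map I.subtype (Submodule.comap N.mkQ ⊤) = I
    rw [Submodule.comap_top, Submodule.map_top, Submodule.range_subtype]
  · simpa using hp0.trans hq3

/-- Concatenate chains between consecutive powers of the maximal ideal. -/
lemma exists_long_ideal_chain (m : Ideal R) {e N : ℕ}
    (hlevel : ∀ s, N ≤ s → ∃ p : LTSeries (Ideal R),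
      p.head = m ^ (s + 1) ∧ p.last = m ^ s ∧ e ≤ p.length) :
    ∀ t : ℕ, ∃ p : LTSeries (Ideal R),
      p.head = m ^ (N + t) ∧ p.last = m ^ N ∧ t * e ≤ p.length := by
  intro t
  induction t with
  | zero => exact ⟨RelSeries.singleton _ (m ^ N), RelSeries.head_singleton _,
      RelSeries.last_singleton _, by simp⟩
  | succ t ih =>
    obtain ⟨p, hp1, hp2, hp3⟩ := ih
    obtain ⟨q, hq1, hq2, hq3⟩ := hlevel (N + t) (by omega)
    refine ⟨q.smash p (by rw [hq2, hp1]), ?_, ?_, ?_⟩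
    · rw [RelSeries.head_smash, hq1, show N + t + 1 = N + (t + 1) by omega]
    · rw [RelSeries.last_smash, hp2]
    · have : (q.smash p (by rw [hq2, hp1])).length = q.length + p.length := rfl
      rw [this]
      calc (t + 1) * e = e + t * e := by ring
      _ ≤ q.length + p.length := Nat.add_le_add hq3 hp3

/-- Key injectivity: two ideals containing `x ^ n` with the same colon data agree. -/
lemma le_of_colon_sup_le (x : R) (n : ℕ) (J J' : Ideal R)
    (hJJ' : J ≤ J') (hxn : Ideal.span {x ^ n} ≤ J)
    (h : ∀ k, k < n → J'.colon (Ideal.span {x ^ k}) ⊔ Ideal.span {x} ≤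
      J.colon (Ideal.span {x ^ k}) ⊔ Ideal.span {x}) :
    J' ≤ J := by
  intro a ha
  suffices h' : ∀ k, k ≤ n → ∃ j ∈ J, ∃ b, a = j + x ^ k * b ∧ x ^ k * b ∈ J' by
    obtain ⟨j, hj, b, hab, hb⟩ := h' n le_rfl
    have hxb : x ^ n * b ∈ J := hxn (Ideal.mem_span_singleton.mpr ⟨b, rfl⟩)
    rw [hab]
    exact J.add_mem hj hxb
  intro k hk
  induction k with
  | zero => exact ⟨0, J.zero_mem, a, by ring_nf, by simpa using ha⟩
  | succ k ihk =>
    obtain ⟨j, hj, b, hab, hb⟩ := ihk (by omega)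
    have hbcolon : b ∈ J'.colon (Ideal.span {x ^ k}) :=
      Ideal.mem_colon_span_singleton.mpr (by rwa [mul_comm])
    have hmem := h k (by omega) (Ideal.mem_sup_left hbcolon)
    obtain ⟨c, hc, t, ht, hbct⟩ := Submodule.mem_sup.mp hmem
    obtain ⟨u, hu⟩ := Ideal.mem_span_singleton'.mp ht
    have hcx : x ^ k * c ∈ J := by
      have := Ideal.mem_colon_span_singleton.mp hc
      rwa [mul_comm] at this
    refine ⟨j + x ^ k * c, J.add_mem hj hcx, u, ?_, ?_⟩
    · rw [hab, ← hbct, ← hu]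
      ring
    · have heq : x ^ (k + 1) * u = a - (j + x ^ k * c) := by
        rw [hab, ← hbct, ← hu]
        ring
      rw [heq]
      exact J'.sub_mem ha (hJJ' (J.add_mem hj hcx))

/-- A strict chain in a finite product of orders of bounded height is short. -/
lemma pi_chain_length_le {β : Type*} [PartialOrder β] {n μ : ℕ}
    (hht : ∀ b : β, Order.height b ≤ (μ : ℕ∞))
    (q : LTSeries (Fin n → β)) : q.length ≤ n * μ := by
  set H : Fin (q.length + 1) → ℕ := fun i => ∑ k : Fin n, (Order.height (q i k)).toNat with hH
  have hfin : ∀ (b : β), Order.height b ≠ ⊤ := fun b =>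
    fun h => by simpa [h] using hht b
  have hstep : ∀ i : Fin q.length, H i.castSucc < H i.succ := by
    intro i
    have hlt := q.step i
    have hle : q i.castSucc ≤ q i.succ := le_of_lt hlt
    have hne : q i.castSucc ≠ q i.succ := ne_of_lt hlt
    obtain ⟨k0, hk0⟩ : ∃ k0, q i.castSucc k0 ≠ q i.succ k0 := by
      by_contra hcc
      push_neg at hcc
      exact hne (funext hcc)
    have hk0lt : q i.castSucc k0 < q i.succ k0 := lt_of_le_of_ne (hle k0) hk0
    refine Finset.sum_lt_sum (fun k _ => ?_) ⟨k0, Finset.mem_univ k0, ?_⟩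
    · have hmono : Order.height (q i.castSucc k) ≤ Order.height (q i.succ k) :=
        Order.height_mono (hle k)
      exact ENat.toNat_le_toNat hmono (hfin _)
    · have hs : Order.height (q i.castSucc k0) < Order.height (q i.succ k0) :=
        Order.height_strictMono hk0lt (lt_top_iff_ne_top.mpr (hfin _))
      have h1 := ENat.coe_toNat (hfin (q i.castSucc k0))
      have h2 := ENat.coe_toNat (hfin (q i.succ k0))
      rw [← h1, ← h2] at hs
      exact_mod_cast hs
  have hmain : ∀ i : ℕ, (hi : i ≤ q.length) → i ≤ H ⟨i, by omega⟩ := by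
    intro i
    induction i with
    | zero => omega
    | succ i ih =>
      intro hi
      have h1 := ih (by omega)
      have h2 := hstep ⟨i, by omega⟩
      have : H ⟨i, by omega⟩ < H ⟨i + 1, by omega⟩ := h2
      omega
  have hlast : H ⟨q.length, by omega⟩ ≤ n * μ := by
    calc H ⟨q.length, by omega⟩ ≤ ∑ _k : Fin n, μ := by
          apply Finset.sum_le_sum
          intro k _
          have := ENat.toNat_le_toNat (hht (q ⟨q.length, by omega⟩ k)) (by simp)
          simpa using this
    _ = n * μ := by simp [Finset.sum_const, mul_comm]
  exact (hmain q.length le_rfl).trans hlast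

end Aux

/-- If `(R,m)` is a one-dimensional Cohen–Macaulay local ring and `x ∈ m`
is a non zero-divisor of order `d`, then `λ(R/(x)) ≥ d·e(R)`, where the multiplicity `e(R)`
is the eventually constant value of `n ↦ λ(mⁿ/mⁿ⁺¹)`. -/
theorem length_quotient_ge_ord_mul_multiplicity
    (R : Type u) [CommRing R] [IsLocalRing R] [IsNoetherianRing R]
    (hdim : ringKrullDim R = 1) (hCM : IsCMLocalRing R)
    (x : R) (hxm : x ∈ IsLocalRing.maximalIdeal R) (hx : x ∈ nonZeroDivisors R)
    (d : ℕ) (hxd : x ∈ IsLocalRing.maximalIdeal R ^ d)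
    (hxd' : x ∉ IsLocalRing.maximalIdeal R ^ (d + 1))
    (e : ℕ)
    (he : ∃ N : ℕ, ∀ n ≥ N,
      mLength R (idealQuot (IsLocalRing.maximalIdeal R ^ n)
        (IsLocalRing.maximalIdeal R ^ (n + 1))) = ((e : ℕ∞) : WithBot ℕ∞)) :
    (((d * e : ℕ) : ℕ∞) : WithBot ℕ∞) ≤ mLength R (R ⧸ Ideal.span {x}) := by
  by_contra hcon
  push_neg at hcon
  have h0 : (0 : WithBot ℕ∞) ≤ mLength R (R ⧸ Ideal.span {x}) :=
    Order.krullDim_nonneg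
  have hbot : mLength R (R ⧸ Ideal.span {x}) ≠ ⊥ := by
    intro h
    rw [h] at h0
    simp at h0
  obtain ⟨ν, hν⟩ := WithBot.ne_bot_iff_exists.mp hbot
  rw [← hν] at hcon
  have hν2 : ν < ((d * e : ℕ) : ℕ∞) := WithBot.coe_lt_coe.mp hcon
  obtain ⟨μ, hμ⟩ := WithTop.ne_top_iff_exists.mp hν2.ne_top
  have hμlt : μ < d * e := by
    rw [← hμ] at hν2
    exact Nat.cast_lt.mp hν2
  have hd : 0 < d := by
    rcases Nat.eq_zero_or_pos d with h | h
    · subst h; simp at hμlt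
    · exact h
  have he1 : 0 < e := by
    rcases Nat.eq_zero_or_pos e with h | h
    · subst h; simp at hμlt
    · exact h
  obtain ⟨N, hN⟩ := he
  set n := N * e + 1 with hn
  set Mb := n * d with hMb
  have hNlen : N < n := by
    have : N ≤ N * e := Nat.le_mul_of_pos_right N he1
    omega
  have hnleMb : n ≤ Mb := Nat.le_mul_of_pos_right n hd
  have hNle : N ≤ Mb := by omega
  have hlevel : ∀ s, N ≤ s → ∃ p : LTSeries (Ideal R),
      p.head = IsLocalRing.maximalIdeal R ^ (s + 1) ∧
      p.last = IsLocalRing.maximalIdeal R ^ s ∧ e ≤ p.length := fun s hs =>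
    exists_ideal_chain_of_mLength (Ideal.pow_le_pow_right (by omega)) (hN s hs)
  obtain ⟨p, hp1, hp2, hp3⟩ := exists_long_ideal_chain
    (IsLocalRing.maximalIdeal R) hlevel (Mb - N)
  rw [show N + (Mb - N) = Mb by omega] at hp1
  have hxn : Ideal.span {x ^ n} ≤ IsLocalRing.maximalIdeal R ^ Mb := by
    rw [Ideal.span_le, Set.singleton_subset_iff]
    have hmem : x ^ n ∈ (IsLocalRing.maximalIdeal R ^ d) ^ n := Ideal.pow_mem_pow hxd n
    rwa [← pow_mul, Nat.mul_comm d n] at hmem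
  have hxnp : ∀ i, Ideal.span {x ^ n} ≤ p i := by
    intro i
    refine hxn.trans ?_
    rw [← hp1]
    exact p.monotone (Fin.zero_le i)
  set Ψ : Ideal R → (Fin n → Submodule R (R ⧸ Ideal.span {x})) :=
    fun K k => Submodule.map (Ideal.span {x}).mkQ
      (K.colon (Ideal.span {x ^ (k : ℕ)}) ⊔ Ideal.span {x}) with hΨ
  have hΨmono : Monotone Ψ := by
    intro K K' hKK' k
    exact Submodule.map_mono (sup_le_sup_right (Submodule.colon_mono hKK' le_rfl) _)
  have habsorb : ∀ A : Ideal R, Ideal.span {x} ⊔ (A ⊔ Ideal.span {x}) = A ⊔ Ideal.span {x} := by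
    intro A
    rw [sup_comm, sup_assoc, sup_idem]
  have hstep : ∀ i : Fin p.length, Ψ (p i.castSucc) < Ψ (p i.succ) := by
    intro i
    have hlt := p.step i
    refine lt_of_le_of_ne (hΨmono hlt.le) ?_
    intro heq
    have hcol : ∀ k, k < n →
        (p i.succ).colon (Ideal.span {x ^ k}) ⊔ Ideal.span {x} ≤
        (p i.castSucc).colon (Ideal.span {x ^ k}) ⊔ Ideal.span {x} := by
      intro k hk
      have h1 : Ψ (p i.castSucc) ⟨k, hk⟩ = Ψ (p i.succ) ⟨k, hk⟩ := congrFun heq _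
      have h2 := congrArg (Submodule.comap (Ideal.span {x}).mkQ) h1
      rw [hΨ] at h2
      simp only [Submodule.comap_map_mkQ] at h2
      rw [habsorb, habsorb] at h2
      exact le_of_eq h2.symm
    exact absurd (le_of_colon_sup_le x n _ _ hlt.le (hxnp i.castSucc) hcol) hlt.not_ge
  set q : LTSeries (Fin n → Submodule R (R ⧸ Ideal.span {x})) :=
    ⟨p.length, fun i => Ψ (p i), hstep⟩ with hq
  have hkr : mLength R (R ⧸ Ideal.span {x}) = ((μ : ℕ∞) : WithBot ℕ∞) := by
    rw [← hν, ← hμ]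
    rfl
  have hht : ∀ b : Submodule R (R ⧸ Ideal.span {x}), Order.height b ≤ (μ : ℕ∞) := by
    intro b
    have h1 := Order.height_le_krullDim b
    have h2 : (Order.height b : WithBot ℕ∞) ≤ ((μ : ℕ∞) : WithBot ℕ∞) :=
      le_of_le_of_eq h1 hkr
    exact WithBot.coe_le_coe.mp h2
  have hqlen := pi_chain_length_le hht q
  have hA : (Mb - N) * e ≤ n * μ := le_trans hp3 hqlen
  have htN : (Mb - N) + N = n * d := by omega
  have h1 : (Mb - N) * e + N * e = n * (d * e) := by
    rw [← Nat.add_mul, htN, Nat.mul_assoc]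
  have h2 : n * μ + n ≤ n * (d * e) := by
    calc n * μ + n = n * (μ + 1) := by ring
    _ ≤ n * (d * e) := Nat.mul_le_mul_left n (by omega)
  have ht1 : 1 ≤ Mb - N := by omega
  have hA1 : 1 ≤ (Mb - N) * e := Nat.mul_le_mul ht1 he1
  set A := (Mb - N) * e with hAdef
  set B := N * e with hBdef
  set C := n * (d * e) with hCdef
  set D := n * μ with hDdef
  omega
end

section
/- Let k be a field, S = k[x,y,z] localized at (x,y,z), I = (x^2 − y^5, x y^2 + y z^3 − z^5)S, R = S/I with maximal ideal m. Then the initial ideal I* of I in P = k[X,Y,Z] equals (X^2, X Y^2, X Y Z^3, Y Z^6), and this ideal admits the primary decomposition (X^2, Y) ∩ (X, Z^6) ∩ (X^2, Y^2, Z^3). -/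
open MvPolynomial

/-- The order of a polynomial: the least degree of a nonzero homogeneous component. -/
noncomputable def minDeg {k : Type*} [Field k] {σ : Type*} (f : MvPolynomial σ k) : ℕ :=
  sInf {n : ℕ | homogeneousComponent n f ≠ 0}

/-- The initial form of a polynomial: its nonzero homogeneous component of least degree. -/
noncomputable def initForm {k : Type*} [Field k] {σ : Type*} (f : MvPolynomial σ k) :
    MvPolynomial σ k :=
  homogeneousComponent (minDeg f) f

namespace StdBasisAux

variable {k : Type*} [Field k]

local notation "T" => MvPolynomial (Fin 3) k

lemma deg3 (d : Fin 3 →₀ ℕ) : d.degree = d 0 + d 1 + d 2 := by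
  rw [Finsupp.degree_apply, Finset.sum_subset (Finset.subset_univ _)
    (fun i _ hi => Finsupp.notMem_support_iff.mp hi), Fin.sum_univ_three]

lemma deg3_add (d e : Fin 3 →₀ ℕ) : (d + e).degree = d.degree + e.degree := by
  simp [deg3]; ring

/-- All monomials of `p` have degree at least `n`. -/
def ordGe (p : T) (n : ℕ) : Prop := ∀ d ∈ p.support, n ≤ d.degree

lemma ordGe_zero (n : ℕ) : ordGe (0 : T) n := by intro d hd; simp at hd

lemma ordGe_bot (p : T) : ordGe p 0 := fun d _ => Nat.zero_le _

lemma ordGe_mono {p : T} {m n : ℕ} (h : ordGe p n) (hm : m ≤ n) : ordGe p m :=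
  fun d hd => le_trans hm (h d hd)

lemma ordGe_add {p q : T} {n : ℕ} (hp : ordGe p n) (hq : ordGe q n) : ordGe (p + q) n := by
  intro d hd
  rcases Finset.mem_union.mp (MvPolynomial.support_add hd) with h | h
  · exact hp d h
  · exact hq d h

lemma ordGe_neg {p : T} {n : ℕ} (hp : ordGe p n) : ordGe (-p) n := by
  intro d hd; exact hp d (by simpa using hd)

lemma ordGe_sub {p q : T} {n : ℕ} (hp : ordGe p n) (hq : ordGe q n) : ordGe (p - q) n := by
  rw [sub_eq_add_neg]; exact ordGe_add hp (ordGe_neg hq)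

lemma ordGe_mul {p q : T} {m n : ℕ} (hp : ordGe p m) (hq : ordGe q n) :
    ordGe (p * q) (m + n) := by
  classical
  intro d hd
  obtain ⟨a, ha, b, hb, rfl⟩ := Finset.mem_add.mp (MvPolynomial.support_mul p q hd)
  rw [deg3_add]
  exact add_le_add (hp a ha) (hq b hb)

lemma ordGe_pow {p : T} {m : ℕ} (hp : ordGe p m) (e : ℕ) : ordGe (p ^ e) (e * m) := by
  induction e with
  | zero => simpa using ordGe_bot _
  | succ n ih =>
    have := ordGe_mul ih hp
    rw [pow_succ]
    convert this using 1
    ring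

lemma ordGe_X (i : Fin 3) : ordGe (X i : T) 1 := by
  intro d hd
  rw [MvPolynomial.support_X] at hd
  simp at hd
  subst hd
  fin_cases i <;> simp [deg3, Finsupp.single_apply]

lemma ordGe_monomial (d : Fin 3 →₀ ℕ) (c : k) : ordGe (monomial d c) d.degree := by
  intro e he
  have := MvPolynomial.support_monomial_subset (s := d) (a := c) he
  simp only [Finset.mem_singleton] at this
  subst this
  exact le_refl _

lemma homogeneousComponent_eq_zero_of_ordGe {p : T} {n m : ℕ} (h : ordGe p n) (hm : m < n) :
    homogeneousComponent m p = 0 := by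
  apply homogeneousComponent_eq_zero'
  intro d hd
  exact fun hdm => absurd (hdm ▸ h d hd) (by omega)

lemma ordGe_of_comp_zero {p : T} {n : ℕ} (h : ∀ j < n, homogeneousComponent j p = 0) :
    ordGe p n := by
  intro d hd
  by_contra hlt
  push_neg at hlt
  have h0 := h d.degree hlt
  have : coeff d (homogeneousComponent d.degree p) = coeff d p := by
    rw [coeff_homogeneousComponent, if_pos rfl]
  rw [h0] at this
  simp at this
  exact (MvPolynomial.mem_support_iff.mp hd) this.symm


lemma comp_ne_zero_minDeg {p : T} (hp : p ≠ 0) :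
    homogeneousComponent (minDeg p) p ≠ 0 := by
  have hne : {n : ℕ | homogeneousComponent n p ≠ 0}.Nonempty := by
    by_contra h
    rw [Set.not_nonempty_iff_eq_empty] at h
    apply hp
    have := sum_homogeneousComponent p
    rw [← this]
    apply Finset.sum_eq_zero
    intro i _
    by_contra hne
    have : i ∈ {n : ℕ | homogeneousComponent n p ≠ 0} := hne
    rw [h] at this
    exact this
  exact Nat.sInf_mem hne

lemma initForm_ne_zero {p : T} (hp : p ≠ 0) : initForm p ≠ 0 := comp_ne_zero_minDeg hp

lemma comp_eq_zero_of_lt_minDeg {p : T} {j : ℕ} (hj : j < minDeg p) :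
    homogeneousComponent j p = 0 := by
  have := Nat.notMem_of_lt_sInf (s := {n : ℕ | homogeneousComponent n p ≠ 0}) hj
  simpa using this

lemma ordGe_minDeg (p : T) : ordGe p (minDeg p) :=
  ordGe_of_comp_zero (fun _ hj => comp_eq_zero_of_lt_minDeg hj)

lemma minDeg_eq_of {p : T} {n : ℕ} (h1 : homogeneousComponent n p ≠ 0)
    (h2 : ∀ j < n, homogeneousComponent j p = 0) : minDeg p = n := by
  refine le_antisymm (Nat.sInf_le h1) ?_
  by_contra hlt
  push_neg at hlt
  exact comp_ne_zero_minDeg (fun h0 => h1 (by simp [h0])) (h2 _ hlt)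

lemma exists_deg_eq_minDeg {p : T} (hp : p ≠ 0) :
    ∃ d ∈ p.support, d.degree = minDeg p := by
  have h := comp_ne_zero_minDeg hp
  obtain ⟨d, hd⟩ := MvPolynomial.ne_zero_iff.mp h
  rw [coeff_homogeneousComponent] at hd
  by_cases hdd : d.degree = minDeg p
  · exact ⟨d, MvPolynomial.mem_support_iff.mpr (by rwa [if_pos hdd] at hd), hdd⟩
  · rw [if_neg hdd] at hd; exact absurd rfl hd

lemma comp_mul_low {p q : T} {u v : ℕ} (hp : ordGe p u) (hq : ordGe q v) :
    homogeneousComponent (u + v) (p * q) =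
      homogeneousComponent u p * homogeneousComponent v q := by
  classical
  ext d
  rw [coeff_homogeneousComponent, MvPolynomial.coeff_mul, MvPolynomial.coeff_mul]
  by_cases hd : d.degree = u + v
  · rw [if_pos hd]
    apply Finset.sum_congr rfl
    rintro ⟨a, b⟩ hab
    have hab' : a + b = d := Finset.HasAntidiagonal.mem_antidiagonal.mp hab
    have hdeg : a.degree + b.degree = u + v := by rw [← deg3_add, hab', hd]
    simp only [coeff_homogeneousComponent]
    by_cases ha : a.degree = u
    · have hb : b.degree = v := by omega
      rw [if_pos ha, if_pos hb]
    · rw [if_neg ha]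
      rcases lt_or_gt_of_ne ha with hlt | hgt
      · have : coeff a p = 0 := by
          by_contra hc
          exact absurd (hp a (MvPolynomial.mem_support_iff.mpr hc)) (by omega)
        simp [this]
      · have hbv : b.degree < v := by omega
        have : coeff b q = 0 := by
          by_contra hc
          exact absurd (hq b (MvPolynomial.mem_support_iff.mpr hc)) (by omega)
        simp [this]
  · rw [if_neg hd]
    symm
    apply Finset.sum_eq_zero
    rintro ⟨a, b⟩ hab
    have hab' : a + b = d := Finset.HasAntidiagonal.mem_antidiagonal.mp hab
    simp only [coeff_homogeneousComponent]
    by_cases ha : a.degree = u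
    · have hb : ¬ b.degree = v := by
        intro hb
        apply hd
        rw [← hab', deg3_add, ha, hb]
      rw [if_neg hb, mul_zero]
    · rw [if_neg ha, zero_mul]

lemma comp_mul_zero_of_lt {p q : T} {u v j : ℕ} (hp : ordGe p u) (hq : ordGe q v)
    (hj : j < u + v) : homogeneousComponent j (p * q) = 0 :=
  homogeneousComponent_eq_zero_of_ordGe (ordGe_mul hp hq) hj

lemma minDeg_mul {p q : T} (hp : p ≠ 0) (hq : q ≠ 0) :
    minDeg (p * q) = minDeg p + minDeg q := by
  apply minDeg_eq_of
  · rw [comp_mul_low (ordGe_minDeg p) (ordGe_minDeg q)]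
    exact mul_ne_zero (comp_ne_zero_minDeg hp) (comp_ne_zero_minDeg hq)
  · intro j hj
    exact comp_mul_zero_of_lt (ordGe_minDeg p) (ordGe_minDeg q) hj

lemma initForm_mul {p q : T} (hp : p ≠ 0) (hq : q ≠ 0) :
    initForm (p * q) = initForm p * initForm q := by
  rw [initForm, minDeg_mul hp hq, comp_mul_low (ordGe_minDeg p) (ordGe_minDeg q)]
  rfl


/-- Shifted order condition: every monomial `d` of `p` satisfies `t ≤ c + deg d`. -/
def shOrd (p : T) (c t : ℕ) : Prop := ∀ d ∈ p.support, t ≤ c + d.degree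

lemma shOrd_zero (c t : ℕ) : shOrd (0 : T) c t := by intro d hd; simp at hd

lemma shOrd_of_ordGe {p : T} {u c t : ℕ} (h : ordGe p u) (hct : t ≤ c + u) :
    shOrd p c t := fun d hd => le_trans hct (by have := h d hd; omega)

lemma shOrd_of_le {p : T} {c t : ℕ} (hct : t ≤ c) : shOrd p c t :=
  fun d _ => le_trans hct (Nat.le_add_right _ _)

lemma shOrd_to_ordGe {p : T} {c t : ℕ} (h : shOrd p c t) : ordGe p (t - c) :=
  fun d hd => by have := h d hd; omega

lemma shOrd_add {p q : T} {c t : ℕ} (hp : shOrd p c t) (hq : shOrd q c t) :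
    shOrd (p + q) c t := by
  intro d hd
  rcases Finset.mem_union.mp (MvPolynomial.support_add hd) with h | h
  · exact hp d h
  · exact hq d h

lemma shOrd_neg {p : T} {c t : ℕ} (hp : shOrd p c t) : shOrd (-p) c t := by
  intro d hd; exact hp d (by simpa using hd)

lemma shOrd_sub {p q : T} {c t : ℕ} (hp : shOrd p c t) (hq : shOrd q c t) :
    shOrd (p - q) c t := by
  rw [sub_eq_add_neg]; exact shOrd_add hp (shOrd_neg hq)

lemma shOrd_succ {p : T} {c t : ℕ} (hp : shOrd p c t) : shOrd p (c + 1) (t + 1) :=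
  fun d hd => by have := hp d hd; omega

lemma shOrd_mul {p w : T} {c c' t t' u : ℕ} (hp : shOrd p c t) (hw : ordGe w u)
    (hc : t' + c ≤ t + c' + u) : shOrd (p * w) c' t' := by
  classical
  intro d hd
  obtain ⟨a, ha, b, hb, rfl⟩ := Finset.mem_add.mp (MvPolynomial.support_mul p w hd)
  have h1 := hp a ha
  have h2 := hw b hb
  rw [deg3_add]
  omega

lemma shOrd_sub_comp {a : T} {c t : ℕ} (h : shOrd a c t) (hct : c ≤ t) :
    shOrd (a - homogeneousComponent (t - c) a) c (t + 1) := by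
  have hord : ordGe a (t - c) := shOrd_to_ordGe h
  have hcomp : ∀ j < t - c + 1, homogeneousComponent j (a - homogeneousComponent (t - c) a) = 0 := by
    intro j hj
    rw [map_sub]
    by_cases hjc : j = t - c
    · subst hjc
      rw [homogeneousComponent_of_mem (homogeneousComponent_mem (t - c) a), if_pos rfl, sub_self]
    · rw [homogeneousComponent_eq_zero_of_ordGe hord (by omega),
        homogeneousComponent_of_mem (homogeneousComponent_mem (t - c) a), if_neg hjc, sub_zero]
  apply shOrd_of_ordGe (ordGe_of_comp_zero hcomp)
  omega

lemma comp_mul_shOrd {a g : T} {c t : ℕ} (ha : shOrd a c t) (hg : ordGe g c) :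
    homogeneousComponent t (a * g) =
      (if c ≤ t then homogeneousComponent (t - c) a else 0) * homogeneousComponent c g := by
  by_cases hct : c ≤ t
  · rw [if_pos hct]
    have : t = (t - c) + c := by omega
    rw [this, comp_mul_low (shOrd_to_ordGe ha) hg, Nat.add_sub_cancel]
  · rw [if_neg hct, zero_mul]
    have : ordGe (a * g) c := by
      have := ordGe_mul (ordGe_bot a) hg
      simpa using this
    exact homogeneousComponent_eq_zero_of_ordGe this (by omega)

/-- Split a polynomial according to a predicate on its monomials. -/
lemma split_support (p : T) (P : (Fin 3 →₀ ℕ) → Prop) [DecidablePred P] :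
    ∃ p1 p2 : T, p = p1 + p2 ∧ (∀ d ∈ p1.support, d ∈ p.support ∧ P d) ∧
      (∀ d ∈ p2.support, d ∈ p.support ∧ ¬ P d) := by
  classical
  refine ⟨∑ d ∈ p.support.filter P, monomial d (coeff d p),
    ∑ d ∈ p.support.filter (fun d => ¬ P d), monomial d (coeff d p), ?_, ?_, ?_⟩
  · rw [Finset.sum_filter_add_sum_filter_not, ← MvPolynomial.as_sum]
  · intro d hd
    have hc : coeff d (∑ e ∈ p.support.filter P, monomial e (coeff e p)) ≠ 0 :=
      MvPolynomial.mem_support_iff.mp hd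
    rw [MvPolynomial.coeff_sum] at hc
    simp_rw [MvPolynomial.coeff_monomial] at hc
    rw [Finset.sum_ite_eq' (p.support.filter P) d (fun e => coeff e p)] at hc
    by_cases hmem : d ∈ p.support.filter P
    · exact Finset.mem_filter.mp hmem
    · rw [if_neg hmem] at hc; exact absurd rfl hc
  · intro d hd
    have hc : coeff d (∑ e ∈ p.support.filter (fun e => ¬ P e), monomial e (coeff e p)) ≠ 0 :=
      MvPolynomial.mem_support_iff.mp hd
    rw [MvPolynomial.coeff_sum] at hc
    simp_rw [MvPolynomial.coeff_monomial] at hc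
    rw [Finset.sum_ite_eq' _ d (fun e => coeff e p)] at hc
    by_cases hmem : d ∈ p.support.filter (fun e => ¬ P e)
    · exact Finset.mem_filter.mp hmem
    · rw [if_neg hmem] at hc; exact absurd rfl hc

/-- Division by a variable, with order control. -/
lemma div_X {h : T} {i : Fin 3} (hs : ∀ d ∈ h.support, 1 ≤ d i) :
    ∃ r : T, h = X i * r ∧ ∀ d ∈ r.support, ∃ e ∈ h.support, e.degree = d.degree + 1 := by
  classical
  refine ⟨∑ d ∈ h.support, monomial (d - Finsupp.single i 1) (coeff d h), ?_, ?_⟩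
  · rw [Finset.mul_sum]
    conv_lhs => rw [MvPolynomial.as_sum h]
    apply Finset.sum_congr rfl
    intro d hd
    have hle : Finsupp.single i 1 ≤ d := by
      rw [Finsupp.single_le_iff]
      exact hs d hd
    rw [show (X i : T) = monomial (Finsupp.single i 1) 1 from rfl, monomial_mul, one_mul,
      add_tsub_cancel_of_le hle]
  · intro d hd
    have hc : coeff d (∑ e ∈ h.support, monomial (e - Finsupp.single i 1) (coeff e h)) ≠ 0 :=
      MvPolynomial.mem_support_iff.mp hd
    rw [MvPolynomial.coeff_sum] at hc
    have : ∃ e ∈ h.support, e - Finsupp.single i 1 = d := by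
      by_contra hno
      push_neg at hno
      apply hc
      apply Finset.sum_eq_zero
      intro e he
      rw [MvPolynomial.coeff_monomial, if_neg (hno e he)]
    obtain ⟨e, he, rfl⟩ := this
    refine ⟨e, he, ?_⟩
    have hi := hs e he
    simp only [deg3, Finsupp.tsub_apply]
    fin_cases i <;> simp [Finsupp.single_apply] at hi ⊢ <;> omega

lemma div_X_shOrd {h : T} {i : Fin 3} {c t : ℕ} (hs : ∀ d ∈ h.support, 1 ≤ d i)
    (hh : shOrd h c t) :
    ∃ r : T, h = X i * r ∧ shOrd r (c + 1) t := by
  obtain ⟨r, hr, hsupp⟩ := div_X hs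
  refine ⟨r, hr, ?_⟩
  intro d hd
  obtain ⟨e, he, hdeg⟩ := hsupp d hd
  have := hh e he
  omega


noncomputable section Gens

/-- The generators of the ideal and the auxiliary standard basis elements. -/
def g1 : T := X 0 ^ 2 - X 1 ^ 5
def g2 : T := X 0 * X 1 ^ 2 + X 1 * X 2 ^ 3 - X 2 ^ 5
def g3 : T := X 0 * X 1 * X 2 ^ 3 - X 0 * X 2 ^ 5 + X 1 ^ 7
def g4 : T := X 1 * X 2 ^ 6 - X 2 ^ 8 + X 0 * X 2 ^ 7 - X 1 ^ 8 - X 1 ^ 7 * X 2 ^ 2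

def M1 : T := X 0 ^ 2
def M2 : T := X 0 * X 1 ^ 2
def M3 : T := X 0 * X 1 * X 2 ^ 3
def M4 : T := X 1 * X 2 ^ 6

def E1 : Fin 3 →₀ ℕ := Finsupp.single 0 2
def E2 : Fin 3 →₀ ℕ := Finsupp.single 0 1 + Finsupp.single 1 2
def E3 : Fin 3 →₀ ℕ := Finsupp.single 0 1 + Finsupp.single 1 1 + Finsupp.single 2 3
def E4 : Fin 3 →₀ ℕ := Finsupp.single 1 1 + Finsupp.single 2 6

def gs : Fin 4 → T := ![g1, g2, g3, g4]
def Ms : Fin 4 → T := ![M1, M2, M3, M4]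
def Es : Fin 4 → (Fin 3 →₀ ℕ) := ![E1, E2, E3, E4]
def ds : Fin 4 → ℕ := ![2, 3, 5, 7]

lemma E1_apply : E1 0 = 2 ∧ E1 1 = 0 ∧ E1 2 = 0 := by
  refine ⟨?_, ?_, ?_⟩ <;> simp [E1, Finsupp.single_apply]
lemma E2_apply : E2 0 = 1 ∧ E2 1 = 2 ∧ E2 2 = 0 := by
  refine ⟨?_, ?_, ?_⟩ <;> simp [E2, Finsupp.single_apply]
lemma E3_apply : E3 0 = 1 ∧ E3 1 = 1 ∧ E3 2 = 3 := by
  refine ⟨?_, ?_, ?_⟩ <;> simp [E3, Finsupp.single_apply]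
lemma E4_apply : E4 0 = 0 ∧ E4 1 = 1 ∧ E4 2 = 6 := by
  refine ⟨?_, ?_, ?_⟩ <;> simp [E4, Finsupp.single_apply]

lemma M1_eq : (M1 : T) = monomial E1 1 := by
  rw [M1, E1, X_pow_eq_monomial]
lemma M2_eq : (M2 : T) = monomial E2 1 := by
  rw [M2, E2, show (X 0 : T) = monomial (Finsupp.single 0 1) 1 from rfl, X_pow_eq_monomial,
    monomial_mul, one_mul]
lemma M3_eq : (M3 : T) = monomial E3 1 := by
  rw [M3, E3, show (X 0 : T) = monomial (Finsupp.single 0 1) 1 from rfl,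
    show (X 1 : T) = monomial (Finsupp.single 1 1) 1 from rfl, X_pow_eq_monomial,
    monomial_mul, monomial_mul, one_mul, one_mul]
lemma M4_eq : (M4 : T) = monomial E4 1 := by
  rw [M4, E4, show (X 1 : T) = monomial (Finsupp.single 1 1) 1 from rfl, X_pow_eq_monomial,
    monomial_mul, one_mul]

lemma ordGe_X_pow (i : Fin 3) (e : ℕ) : ordGe ((X i : T) ^ e) e := by
  simpa using ordGe_pow (ordGe_X (k := k) i) e

lemma M1_ne_zero : (M1 : T) ≠ 0 := pow_ne_zero _ (X_ne_zero 0)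
lemma M2_ne_zero : (M2 : T) ≠ 0 := mul_ne_zero (X_ne_zero 0) (pow_ne_zero _ (X_ne_zero 1))
lemma M3_ne_zero : (M3 : T) ≠ 0 :=
  mul_ne_zero (mul_ne_zero (X_ne_zero 0) (X_ne_zero 1)) (pow_ne_zero _ (X_ne_zero 2))
lemma M4_ne_zero : (M4 : T) ≠ 0 := mul_ne_zero (X_ne_zero 1) (pow_ne_zero _ (X_ne_zero 2))

lemma init_data {p m tail : T} {n : ℕ} (hp : p = m + tail) (hm : m.IsHomogeneous n)
    (ht : ordGe tail (n + 1)) :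
    homogeneousComponent n p = m ∧ ∀ j < n, homogeneousComponent j p = 0 := by
  have hmem : m ∈ homogeneousSubmodule (Fin 3) k n := (mem_homogeneousSubmodule n m).mpr hm
  constructor
  · rw [hp, map_add, homogeneousComponent_of_mem hmem, if_pos rfl,
      homogeneousComponent_eq_zero_of_ordGe ht (by omega), add_zero]
  · intro j hj
    rw [hp, map_add, homogeneousComponent_of_mem hmem, if_neg (by omega),
      homogeneousComponent_eq_zero_of_ordGe ht (by omega), add_zero]

lemma M1_hom : (M1 : T).IsHomogeneous 2 := by
  rw [M1_eq]; exact isHomogeneous_monomial _ (by simp [deg3, E1_apply.1, E1_apply.2.1, E1_apply.2.2])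
lemma M2_hom : (M2 : T).IsHomogeneous 3 := by
  rw [M2_eq]; exact isHomogeneous_monomial _ (by simp [deg3, E2_apply.1, E2_apply.2.1, E2_apply.2.2])
lemma M3_hom : (M3 : T).IsHomogeneous 5 := by
  rw [M3_eq]; exact isHomogeneous_monomial _ (by simp [deg3, E3_apply.1, E3_apply.2.1, E3_apply.2.2])
lemma M4_hom : (M4 : T).IsHomogeneous 7 := by
  rw [M4_eq]; exact isHomogeneous_monomial _ (by simp [deg3, E4_apply.1, E4_apply.2.1, E4_apply.2.2])

lemma g1_data : homogeneousComponent 2 (g1 : T) = M1 ∧ ∀ j < 2, homogeneousComponent j (g1 : T) = 0 :=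
  init_data (tail := -(X 1 ^ 5)) (by rw [g1, M1]; ring) M1_hom
    (ordGe_neg (ordGe_mono (ordGe_X_pow 1 5) (by omega)))

lemma g2_data : homogeneousComponent 3 (g2 : T) = M2 ∧ ∀ j < 3, homogeneousComponent j (g2 : T) = 0 :=
  init_data (tail := X 1 * X 2 ^ 3 - X 2 ^ 5) (by rw [g2, M2]; ring) M2_hom
    (ordGe_sub (by simpa using ordGe_mul (ordGe_X (k := k) 1) (ordGe_X_pow 2 3))
      (ordGe_mono (ordGe_X_pow 2 5) (by omega)))

lemma g3_data : homogeneousComponent 5 (g3 : T) = M3 ∧ ∀ j < 5, homogeneousComponent j (g3 : T) = 0 :=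
  init_data (tail := -(X 0 * X 2 ^ 5) + X 1 ^ 7) (by rw [g3, M3]; ring) M3_hom
    (ordGe_add (ordGe_neg (by simpa using ordGe_mul (ordGe_X (k := k) 0) (ordGe_X_pow 2 5)))
      (ordGe_mono (ordGe_X_pow 1 7) (by omega)))

lemma g4_data : homogeneousComponent 7 (g4 : T) = M4 ∧ ∀ j < 7, homogeneousComponent j (g4 : T) = 0 :=
  init_data (tail := -(X 2 ^ 8) + X 0 * X 2 ^ 7 - X 1 ^ 8 - X 1 ^ 7 * X 2 ^ 2)
    (by rw [g4, M4]; ring) M4_hom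
    (by
      apply ordGe_sub
      apply ordGe_sub
      apply ordGe_add
      · exact ordGe_neg (ordGe_X_pow 2 8)
      · exact by simpa using ordGe_mul (ordGe_X (k := k) 0) (ordGe_X_pow 2 7)
      · exact ordGe_mono (ordGe_X_pow 1 8) (by omega)
      · exact ordGe_mono (by simpa using ordGe_mul (ordGe_X_pow (k := k) 1 7) (ordGe_X_pow 2 2)) (by omega))

lemma gs_comp : ∀ i : Fin 4, homogeneousComponent (ds i) (gs i : T) = Ms i := by
  intro i
  fin_cases i
  · exact g1_data.1
  · exact g2_data.1
  · exact g3_data.1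
  · exact g4_data.1

lemma gs_ordGe : ∀ i : Fin 4, ordGe (gs i : T) (ds i) := by
  intro i
  fin_cases i
  · exact ordGe_of_comp_zero g1_data.2
  · exact ordGe_of_comp_zero g2_data.2
  · exact ordGe_of_comp_zero g3_data.2
  · exact ordGe_of_comp_zero g4_data.2

end Gens


section Corr

lemma mul_monomial_support_cond {h : T} {E : Fin 3 →₀ ℕ} {s : Set (Fin 3 →₀ ℕ)}
    (hmem : h * monomial E 1 ∈ Ideal.span ((fun e => monomial e (1 : k)) '' s)) :
    ∀ d ∈ h.support, ∃ e ∈ s, e ≤ d + E := by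
  intro d hd
  have hsup : d + E ∈ (h * monomial E 1).support := by
    rw [MvPolynomial.mem_support_iff, MvPolynomial.coeff_mul_monomial, mul_one]
    exact MvPolynomial.mem_support_iff.mp hd
  exact mem_ideal_span_monomial_image.mp hmem _ hsup

lemma setM123 : ({M1, M2, M3} : Set T) = (fun e => monomial e (1 : k)) '' {E1, E2, E3} := by
  simp only [Set.image_insert_eq, Set.image_singleton, M1_eq, M2_eq, M3_eq]

lemma setM12 : ({M1, M2} : Set T) = (fun e => monomial e (1 : k)) '' {E1, E2} := by
  simp only [Set.image_insert_eq, Set.image_singleton, M1_eq, M2_eq]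

lemma setM1 : ({M1} : Set T) = (fun e => monomial e (1 : k)) '' {E1} := by
  simp only [Set.image_singleton, M1_eq]

lemma suppA {h : T} (hmem : h * M4 ∈ Ideal.span ({M1, M2, M3} : Set T)) :
    ∀ d ∈ h.support, 1 ≤ d 0 := by
  rw [M4_eq, setM123] at hmem
  intro d hd
  obtain ⟨e, he, hle⟩ := mul_monomial_support_cond hmem d hd
  have hle0 := Finsupp.le_def.mp hle 0
  rw [Finsupp.add_apply] at hle0
  have h40 := E4_apply.1
  rcases he with rfl | rfl | rfl
  · have := E1_apply.1; omega
  · have := E2_apply.1; omega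
  · have := E3_apply.1; omega

lemma suppB {h : T} (hmem : h * M3 ∈ Ideal.span ({M1, M2} : Set T)) :
    ∀ d ∈ h.support, 1 ≤ d 0 ∨ 1 ≤ d 1 := by
  rw [M3_eq, setM12] at hmem
  intro d hd
  obtain ⟨e, he, hle⟩ := mul_monomial_support_cond hmem d hd
  have hle0 := Finsupp.le_def.mp hle 0
  have hle1 := Finsupp.le_def.mp hle 1
  rw [Finsupp.add_apply] at hle0 hle1
  have h30 := E3_apply.1
  have h31 := E3_apply.2.1
  rcases he with rfl | rfl
  · have := E1_apply.1; left; omega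
  · have := E2_apply.2.1; right; omega

lemma suppC {h : T} (hmem : h * M2 ∈ Ideal.span ({M1} : Set T)) :
    ∀ d ∈ h.support, 1 ≤ d 0 := by
  rw [M2_eq, setM1] at hmem
  intro d hd
  obtain ⟨e, he, hle⟩ := mul_monomial_support_cond hmem d hd
  have hle0 := Finsupp.le_def.mp hle 0
  rw [Finsupp.add_apply] at hle0
  have h20 := E2_apply.1
  rcases he with rfl
  have := E1_apply.1; omega

lemma corr {h : Fin 4 → T} {t : ℕ} (hsyz : ∑ i, h i * Ms i = 0)
    (hord : ∀ i, shOrd (h i) (ds i) t) :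
    ∃ c : Fin 4 → T, (∑ i, h i * gs i = ∑ i, c i * gs i) ∧
      ∀ i, shOrd (c i) (ds i) (t + 1) := by
  have hsyz4 : h 0 * M1 + h 1 * M2 + h 2 * M3 + h 3 * M4 = 0 := by
    simpa [Fin.sum_univ_four, Ms] using hsyz
  -- Step A: eliminate the 4th coefficient
  have hmemA : h 3 * M4 ∈ Ideal.span ({M1, M2, M3} : Set T) := by
    have heq : h 3 * M4 = -(h 0 * M1 + h 1 * M2 + h 2 * M3) := by linear_combination hsyz4
    rw [heq]
    refine neg_mem (add_mem (add_mem ?_ ?_) ?_) <;>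
      exact Ideal.mul_mem_left _ _ (Ideal.subset_span (by simp))
  obtain ⟨r, hr, hrord⟩ := div_X_shOrd (suppA hmemA) (show shOrd (h 3) 7 t by simpa [ds] using hord 3)
  set h3' : T := h 2 + r * X 2 ^ 3 with hh3'
  have hord3' : shOrd h3' 5 t :=
    shOrd_add (show shOrd (h 2) 5 t by simpa [ds] using hord 2)
      (shOrd_mul hrord (ordGe_X_pow 2 3) (by omega))
  have hsyz3 : h 0 * M1 + h 1 * M2 + h3' * M3 = 0 := by
    rw [hh3']
    simp only [M1, M2, M3, M4] at hsyz4
    simp only [M1, M2, M3]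
    linear_combination hsyz4 - (X 1 * X 2 ^ 6 : T) * hr
  -- Step B: eliminate the 3rd coefficient
  have hmemB : h3' * M3 ∈ Ideal.span ({M1, M2} : Set T) := by
    have heq : h3' * M3 = -(h 0 * M1 + h 1 * M2) := by linear_combination hsyz3
    rw [heq]
    refine neg_mem (add_mem ?_ ?_) <;>
      exact Ideal.mul_mem_left _ _ (Ideal.subset_span (by simp))
  obtain ⟨hA, hB, hsplit, hPA, hPB⟩ := split_support h3' (fun d => 1 ≤ d 0)
  have hcondB : ∀ d ∈ hB.support, 1 ≤ d 1 := by
    intro d hd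
    rcases suppB hmemB d (hPB d hd).1 with h1 | h1
    · exact absurd h1 (hPB d hd).2
    · exact h1
  obtain ⟨p, hp, hpord⟩ := div_X_shOrd (fun d hd => (hPA d hd).2)
    (fun d hd => hord3' d (hPA d hd).1)
  obtain ⟨q, hq, hqord⟩ := div_X_shOrd hcondB (fun d hd => hord3' d (hPB d hd).1)
  have hs : h3' = X 0 * p + X 1 * q := by rw [hsplit, hp, hq]
  set h1' : T := h 0 + p * (X 1 * X 2 ^ 3) with hh1'
  set h2' : T := h 1 + q * X 2 ^ 3 with hh2'
  have hord1' : shOrd h1' 2 t :=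
    shOrd_add (show shOrd (h 0) 2 t by simpa [ds] using hord 0)
      (shOrd_mul hpord (show ordGe (X 1 * X 2 ^ 3 : T) 4 by
        simpa using ordGe_mul (ordGe_X (k := k) 1) (ordGe_X_pow 2 3)) (by omega))
  have hord2' : shOrd h2' 3 t :=
    shOrd_add (show shOrd (h 1) 3 t by simpa [ds] using hord 1)
      (shOrd_mul hqord (ordGe_X_pow 2 3) (by omega))
  have hsyz2 : h1' * M1 + h2' * M2 = 0 := by
    rw [hh1', hh2']
    simp only [M1, M2, M3] at hsyz3
    simp only [M1, M2]
    linear_combination hsyz3 - (X 0 * X 1 * X 2 ^ 3 : T) * hs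
  -- Step C
  have hmemC : h2' * M2 ∈ Ideal.span ({M1} : Set T) := by
    have heq : h2' * M2 = -(h1' * M1) := by linear_combination hsyz2
    rw [heq]
    exact neg_mem (Ideal.mul_mem_left _ _ (Ideal.subset_span (by simp)))
  obtain ⟨w, hw, hword⟩ := div_X_shOrd (suppC hmemC) hord2'
  have hw1 : h1' = -(w * X 1 ^ 2) := by
    have hzero : (M1 : T) * (h1' + w * X 1 ^ 2) = 0 := by
      simp only [M1, M2] at hsyz2 ⊢
      linear_combination hsyz2 - (X 0 * X 1 ^ 2 : T) * hw
    rcases mul_eq_zero.mp hzero with h1 | h1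
    · exact absurd h1 M1_ne_zero
    · exact eq_neg_of_add_eq_zero_left h1
  -- assemble
  refine ⟨![r * X 2 ^ 7 - p * X 2 ^ 5,
            p * X 1 ^ 5 - r * X 1 ^ 6 - r * (X 1 ^ 5 * X 2 ^ 2),
            w - q * X 2 ^ 2,
            -q], ?_, ?_⟩
  · have eh0 : h 0 = -(w * X 1 ^ 2) - p * (X 1 * X 2 ^ 3) := by
      have h0eq : h 0 = h1' - p * (X 1 * X 2 ^ 3) := by rw [hh1']; ring
      rw [h0eq, hw1]
    have eh1 : h 1 = X 0 * w - q * X 2 ^ 3 := by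
      have h1eq : h 1 = h2' - q * X 2 ^ 3 := by rw [hh2']; ring
      rw [h1eq, hw]
    have eh2 : h 2 = X 0 * p + X 1 * q - r * X 2 ^ 3 := by
      have h2eq : h 2 = h3' - r * X 2 ^ 3 := by rw [hh3']; ring
      rw [h2eq, hs]
    simp only [Fin.sum_univ_four, gs, Matrix.cons_val_zero, Matrix.cons_val_one, Matrix.head_cons,
      Matrix.cons_val_two, Matrix.tail_cons, Matrix.cons_val_three, g1, g2, g3, g4]
    linear_combination (X 0 ^ 2 - X 1 ^ 5 : T) * eh0 +
      (X 0 * X 1 ^ 2 + X 1 * X 2 ^ 3 - X 2 ^ 5 : T) * eh1 +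
      (X 0 * X 1 * X 2 ^ 3 - X 0 * X 2 ^ 5 + X 1 ^ 7 : T) * eh2 +
      (X 1 * X 2 ^ 6 - X 2 ^ 8 + X 0 * X 2 ^ 7 - X 1 ^ 8 - X 1 ^ 7 * X 2 ^ 2 : T) * hr
  · intro i
    fin_cases i
    · show shOrd (r * X 2 ^ 7 - p * X 2 ^ 5) 2 (t + 1)
      exact shOrd_sub (shOrd_mul hrord (ordGe_X_pow 2 7) (by omega))
        (shOrd_mul hpord (ordGe_X_pow 2 5) (by omega))
    · show shOrd (p * X 1 ^ 5 - r * X 1 ^ 6 - r * (X 1 ^ 5 * X 2 ^ 2)) 3 (t + 1)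
      refine shOrd_sub (shOrd_sub (shOrd_mul hpord (ordGe_X_pow 1 5) (by omega))
        (shOrd_mul hrord (ordGe_X_pow 1 6) (by omega))) ?_
      exact shOrd_mul hrord (show ordGe (X 1 ^ 5 * X 2 ^ 2 : T) 7 by
        simpa using ordGe_mul (ordGe_X_pow (k := k) 1 5) (ordGe_X_pow 2 2)) (by omega)
    · show shOrd (w - q * X 2 ^ 2) 5 (t + 1)
      exact shOrd_sub (shOrd_succ hword) (shOrd_mul hqord (ordGe_X_pow 2 2) (by omega))
    · show shOrd (-q) 7 (t + 1)
      exact shOrd_neg (shOrd_succ hqord)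

end Corr


section Main

lemma shOrd_comp {p : T} {n c t : ℕ} (h : t ≤ c + n) :
    shOrd (homogeneousComponent n p) c t := by
  intro d hd
  have := MvPolynomial.mem_support_iff.mp hd
  rw [coeff_homogeneousComponent] at this
  by_cases hdn : d.degree = n
  · omega
  · rw [if_neg hdn] at this; exact absurd rfl this

/-- `g` has a representation in terms of `g1,…,g4` of order at least `t`. -/
def Rep (g : T) (t : ℕ) : Prop :=
  ∃ a : Fin 4 → T, g = ∑ i, a i * gs i ∧ ∀ i, shOrd (a i) (ds i) t

lemma comp_term {a : T} {i : Fin 4} {t : ℕ} (ha : shOrd a (ds i) t) :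
    homogeneousComponent t (a * gs i) =
      (if ds i ≤ t then homogeneousComponent (t - ds i) a else 0) * Ms i := by
  rw [comp_mul_shOrd ha (gs_ordGe i), gs_comp i]

lemma rep_step {g : T} {t : ℕ} (hrep : Rep g t) (ht : t < minDeg g) : Rep g (t + 1) := by
  obtain ⟨a, hg, hordc⟩ := hrep
  classical
  set h : Fin 4 → T := fun i =>
    if ds i ≤ t then homogeneousComponent (t - ds i) (a i) else 0 with hh
  have hsyz : ∑ i, h i * Ms i = 0 := by
    have hc : homogeneousComponent t g = 0 := comp_eq_zero_of_lt_minDeg ht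
    rw [hg, map_sum] at hc
    rw [← hc]
    apply Finset.sum_congr rfl
    intro i _
    rw [comp_term (hordc i)]
  have hordh : ∀ i, shOrd (h i) (ds i) t := by
    intro i
    by_cases hle : ds i ≤ t
    · simp only [hh, if_pos hle]
      exact shOrd_comp (by omega)
    · simp only [hh, if_neg hle]
      exact shOrd_zero _ _
  obtain ⟨c, hceq, hcord⟩ := corr hsyz hordh
  refine ⟨fun i => (a i - h i) + c i, ?_, ?_⟩
  · have hsum : ∑ i, ((a i - h i) + c i) * gs i =
        (∑ i, a i * gs i) - (∑ i, h i * gs i) + (∑ i, c i * gs i) := by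
      simp only [sub_mul, add_mul, Finset.sum_add_distrib, Finset.sum_sub_distrib]
    rw [hsum, ← hceq, hg]
    ring
  · intro i
    apply shOrd_add _ (hcord i)
    by_cases hle : ds i ≤ t
    · have := shOrd_sub_comp (hordc i) hle
      simp only [hh, if_pos hle]
      exact this
    · simp only [hh, if_neg hle, sub_zero]
      exact shOrd_of_le (by omega)

lemma rep_of_mem {g : T} (hg : g ∈ Ideal.span ({g1, g2} : Set T)) : Rep g 0 := by
  obtain ⟨u, v, huv⟩ := Ideal.mem_span_pair.mp hg
  refine ⟨![u, v, 0, 0], ?_, ?_⟩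
  · rw [Fin.sum_univ_four]
    show g = u * gs 0 + v * gs 1 + 0 * gs 2 + 0 * gs 3
    rw [zero_mul, zero_mul, add_zero, add_zero]
    exact huv.symm
  · intro i
    exact fun d _ => Nat.zero_le _

lemma rep_minDeg {g : T} (hg : g ∈ Ideal.span ({g1, g2} : Set T)) : Rep g (minDeg g) := by
  suffices h : ∀ t, t ≤ minDeg g → Rep g t from h _ le_rfl
  intro t
  induction t with
  | zero => exact fun _ => rep_of_mem hg
  | succ n ih => exact fun hn => rep_step (ih (by omega)) (by omega)

lemma key {g : T} (hg : g ∈ Ideal.span ({g1, g2} : Set T)) :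
    initForm g ∈ Ideal.span ({M1, M2, M3, M4} : Set T) := by
  obtain ⟨a, hgeq, hordc⟩ := rep_minDeg hg
  set n := minDeg g with hn
  rw [initForm, ← hn, hgeq, map_sum]
  apply Ideal.sum_mem
  intro i _
  rw [comp_term (hordc i)]
  apply Ideal.mul_mem_left
  apply Ideal.subset_span
  fin_cases i
  · show (M1 : T) ∈ _; simp
  · show (M2 : T) ∈ _; simp
  · show (M3 : T) ∈ _; simp
  · show (M4 : T) ∈ _; simp

end Main


section Assemble

lemma mem_p_iff {w : T} :
    w ∈ Ideal.span ({X 0, X 1, X 2} : Set T) ↔ constantCoeff w = 0 := by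
  constructor
  · intro hw
    have hle : Ideal.span ({X 0, X 1, X 2} : Set T) ≤ RingHom.ker (constantCoeff : T →+* k) := by
      rw [Ideal.span_le]
      rintro x (rfl | rfl | rfl) <;> simp [RingHom.mem_ker]
    exact hle hw
  · intro hw
    have hset : ({X 0, X 1, X 2} : Set T) = (fun e => monomial e (1 : k)) ''
        {Finsupp.single 0 1, Finsupp.single 1 1, Finsupp.single 2 1} := by
      simp only [Set.image_insert_eq, Set.image_singleton]
      rfl
    rw [hset, mem_ideal_span_monomial_image]
    intro d hd
    have hd0 : d ≠ 0 := by
      rintro rfl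
      exact MvPolynomial.mem_support_iff.mp hd (by rwa [← constantCoeff_eq])
    obtain ⟨i, hi⟩ := Finsupp.ne_iff.mp hd0
    refine ⟨Finsupp.single i 1, ?_, Finsupp.single_le_iff.mpr (by simpa using Nat.one_le_iff_ne_zero.mpr (by simpa using hi))⟩
    fin_cases i <;> simp

lemma p_isPrime : (Ideal.span ({X 0, X 1, X 2} : Set T)).IsPrime := by
  rw [Ideal.isPrime_iff]
  constructor
  · intro htop
    have h1 : (1 : T) ∈ Ideal.span ({X 0, X 1, X 2} : Set T) := htop ▸ Submodule.mem_top
    rw [mem_p_iff] at h1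
    simp at h1
  · intro a b hab
    rw [mem_p_iff, map_mul] at hab
    rcases mul_eq_zero.mp hab with h | h
    · exact Or.inl (mem_p_iff.mpr h)
    · exact Or.inr (mem_p_iff.mpr h)

lemma ordGe_of_cc_zero {u : T} (hu : constantCoeff u = 0) : ordGe u 1 := by
  intro d hd
  rcases Nat.eq_zero_or_pos d.degree with h0 | h1
  · exfalso
    rw [Finsupp.degree_eq_zero_iff] at h0
    subst h0
    exact MvPolynomial.mem_support_iff.mp hd (by rwa [← constantCoeff_eq])
  · exact h1

lemma C_ne_zero' {c : k} (hc : c ≠ 0) : (C c : T) ≠ 0 := by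
  intro h
  exact hc (by simpa using congrArg (coeff 0) h)

lemma init_unit_mul {u f : T} (hc : constantCoeff u ≠ 0) (hf : f ≠ 0) :
    initForm (u * f) = C (constantCoeff u) * initForm f := by
  set c := constantCoeff u with hcc
  have hu0 : ordGe (u - C c) 1 := ordGe_of_cc_zero (by simp [hcc])
  have hcomp : ∀ j, homogeneousComponent j (u * f) =
      C c * homogeneousComponent j f + homogeneousComponent j ((u - C c) * f) := by
    intro j
    have : u * f = C c * f + (u - C c) * f := by ring
    rw [this, map_add, homogeneousComponent_C_mul]
  have hzero : ∀ j ≤ minDeg f, homogeneousComponent j ((u - C c) * f) = 0 := by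
    intro j hj
    exact homogeneousComponent_eq_zero_of_ordGe (ordGe_mul hu0 (ordGe_minDeg f)) (by omega)
  have hmain : homogeneousComponent (minDeg f) (u * f) = C c * initForm f := by
    rw [hcomp, hzero _ le_rfl, add_zero]
    rfl
  have hne : homogeneousComponent (minDeg f) (u * f) ≠ 0 := by
    rw [hmain]
    exact mul_ne_zero (C_ne_zero' hc) (initForm_ne_zero hf)
  have hlow : ∀ j < minDeg f, homogeneousComponent j (u * f) = 0 := by
    intro j hj
    rw [hcomp, hzero _ (by omega), add_zero, comp_eq_zero_of_lt_minDeg hj, mul_zero]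
  rw [initForm, minDeg_eq_of hne hlow, hmain]

lemma initForm_zero : initForm (0 : T) = 0 := by simp [initForm]

lemma init_g1 : initForm (g1 : T) = M1 := by
  have hne : homogeneousComponent 2 (g1 : T) ≠ 0 := by
    rw [g1_data.1]; exact M1_ne_zero
  rw [initForm, minDeg_eq_of hne g1_data.2]
  exact g1_data.1
lemma init_g2 : initForm (g2 : T) = M2 := by
  have hne : homogeneousComponent 3 (g2 : T) ≠ 0 := by
    rw [g2_data.1]; exact M2_ne_zero
  rw [initForm, minDeg_eq_of hne g2_data.2]
  exact g2_data.1
lemma init_g3 : initForm (g3 : T) = M3 := by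
  have hne : homogeneousComponent 5 (g3 : T) ≠ 0 := by
    rw [g3_data.1]; exact M3_ne_zero
  rw [initForm, minDeg_eq_of hne g3_data.2]
  exact g3_data.1
lemma init_g4 : initForm (g4 : T) = M4 := by
  have hne : homogeneousComponent 7 (g4 : T) ≠ 0 := by
    rw [g4_data.1]; exact M4_ne_zero
  rw [initForm, minDeg_eq_of hne g4_data.2]
  exact g4_data.1

lemma g1_ne_zero : (g1 : T) ≠ 0 := by
  intro h
  apply M1_ne_zero (k := k)
  rw [← init_g1, h, initForm_zero]
lemma g2_ne_zero : (g2 : T) ≠ 0 := by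
  intro h
  apply M2_ne_zero (k := k)
  rw [← init_g2, h, initForm_zero]
lemma g3_ne_zero : (g3 : T) ≠ 0 := by
  intro h
  apply M3_ne_zero (k := k)
  rw [← init_g3, h, initForm_zero]
lemma g4_ne_zero : (g4 : T) ≠ 0 := by
  intro h
  apply M4_ne_zero (k := k)
  rw [← init_g4, h, initForm_zero]

lemma g1_memJ : (g1 : T) ∈ Ideal.span ({g1, g2} : Set T) := Ideal.subset_span (by simp)
lemma g2_memJ : (g2 : T) ∈ Ideal.span ({g1, g2} : Set T) := Ideal.subset_span (by simp)
lemma g3_memJ : (g3 : T) ∈ Ideal.span ({g1, g2} : Set T) :=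
  Ideal.mem_span_pair.mpr ⟨-(X 1 ^ 2), X 0, by rw [g1, g2, g3]; ring⟩
lemma g4_memJ : (g4 : T) ∈ Ideal.span ({g1, g2} : Set T) :=
  Ideal.mem_span_pair.mpr ⟨X 1 ^ 3 + X 1 ^ 2 * X 2 ^ 2, X 2 ^ 3 - X 0 * X 1 - X 0 * X 2 ^ 2,
    by rw [g1, g2, g4]; ring⟩

end Assemble


section Inter

lemma le3 {s d : Fin 3 →₀ ℕ} : s ≤ d ↔ s 0 ≤ d 0 ∧ s 1 ≤ d 1 ∧ s 2 ≤ d 2 := by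
  rw [Finsupp.le_def]
  constructor
  · intro h; exact ⟨h 0, h 1, h 2⟩
  · rintro ⟨h0, h1, h2⟩ i; fin_cases i <;> assumption

lemma E1_le {d : Fin 3 →₀ ℕ} : E1 ≤ d ↔ 2 ≤ d 0 := by
  rw [le3, E1_apply.1, E1_apply.2.1, E1_apply.2.2]
  try omega
lemma E2_le {d : Fin 3 →₀ ℕ} : E2 ≤ d ↔ 1 ≤ d 0 ∧ 2 ≤ d 1 := by
  rw [le3, E2_apply.1, E2_apply.2.1, E2_apply.2.2]
  try omega
lemma E3_le {d : Fin 3 →₀ ℕ} : E3 ≤ d ↔ 1 ≤ d 0 ∧ 1 ≤ d 1 ∧ 3 ≤ d 2 := by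
  rw [le3, E3_apply.1, E3_apply.2.1, E3_apply.2.2]
  try omega
lemma E4_le {d : Fin 3 →₀ ℕ} : E4 ≤ d ↔ 1 ≤ d 1 ∧ 6 ≤ d 2 := by
  rw [le3, E4_apply.1, E4_apply.2.1, E4_apply.2.2]
  try omega

lemma setM1234 : ({M1, M2, M3, M4} : Set T) = (fun e => monomial e (1 : k)) '' {E1, E2, E3, E4} := by
  simp only [Set.image_insert_eq, Set.image_singleton, M1_eq, M2_eq, M3_eq, M4_eq]

lemma setA : ({X 0 ^ 2, X 1} : Set T) =
    (fun e => monomial e (1 : k)) '' {Finsupp.single 0 2, Finsupp.single 1 1} := by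
  simp only [Set.image_insert_eq, Set.image_singleton, X_pow_eq_monomial]
  rfl

lemma setB : ({X 0, X 2 ^ 6} : Set T) =
    (fun e => monomial e (1 : k)) '' {Finsupp.single 0 1, Finsupp.single 2 6} := by
  simp only [Set.image_insert_eq, Set.image_singleton, X_pow_eq_monomial]
  rfl

lemma setC : ({X 0 ^ 2, X 1 ^ 2, X 2 ^ 3} : Set T) =
    (fun e => monomial e (1 : k)) ''
      {Finsupp.single 0 2, Finsupp.single 1 2, Finsupp.single 2 3} := by
  simp only [Set.image_insert_eq, Set.image_singleton, X_pow_eq_monomial]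

lemma inter_eq : Ideal.span ({M1, M2, M3, M4} : Set T) =
    Ideal.span ({X 0 ^ 2, X 1} : Set T) ⊓ Ideal.span ({X 0, X 2 ^ 6} : Set T) ⊓
      Ideal.span ({X 0 ^ 2, X 1 ^ 2, X 2 ^ 3} : Set T) := by
  ext x
  rw [Submodule.mem_inf, Submodule.mem_inf, setM1234, setA, setB, setC,
    mem_ideal_span_monomial_image, mem_ideal_span_monomial_image,
    mem_ideal_span_monomial_image, mem_ideal_span_monomial_image]
  constructor
  · intro h
    refine ⟨⟨?_, ?_⟩, ?_⟩ <;> intro d hd <;> obtain ⟨e, he, hle⟩ := h d hd <;>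
      rcases he with rfl | rfl | rfl | rfl
    · exact ⟨Finsupp.single 0 2, by simp, Finsupp.single_le_iff.mpr (E1_le.mp hle)⟩
    · exact ⟨Finsupp.single 1 1, by simp, Finsupp.single_le_iff.mpr (by have := (E2_le.mp hle).2; omega)⟩
    · exact ⟨Finsupp.single 1 1, by simp, Finsupp.single_le_iff.mpr (by have := (E3_le.mp hle).2.1; omega)⟩
    · exact ⟨Finsupp.single 1 1, by simp, Finsupp.single_le_iff.mpr (by have := (E4_le.mp hle).1; omega)⟩
    · exact ⟨Finsupp.single 0 1, by simp, Finsupp.single_le_iff.mpr (by have := E1_le.mp hle; omega)⟩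
    · exact ⟨Finsupp.single 0 1, by simp, Finsupp.single_le_iff.mpr (E2_le.mp hle).1⟩
    · exact ⟨Finsupp.single 0 1, by simp, Finsupp.single_le_iff.mpr (E3_le.mp hle).1⟩
    · exact ⟨Finsupp.single 2 6, by simp, Finsupp.single_le_iff.mpr (E4_le.mp hle).2⟩
    · exact ⟨Finsupp.single 0 2, by simp, Finsupp.single_le_iff.mpr (E1_le.mp hle)⟩
    · exact ⟨Finsupp.single 1 2, by simp, Finsupp.single_le_iff.mpr (E2_le.mp hle).2⟩
    · exact ⟨Finsupp.single 2 3, by simp, Finsupp.single_le_iff.mpr (E3_le.mp hle).2.2⟩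
    · exact ⟨Finsupp.single 2 3, by simp, Finsupp.single_le_iff.mpr (by have := (E4_le.mp hle).2; omega)⟩
  · rintro ⟨⟨hA, hB⟩, hC⟩ d hd
    have hA' : 2 ≤ d 0 ∨ 1 ≤ d 1 := by
      obtain ⟨e, he, hle⟩ := hA d hd
      rcases he with rfl | rfl
      · exact Or.inl (Finsupp.single_le_iff.mp hle)
      · exact Or.inr (Finsupp.single_le_iff.mp hle)
    have hB' : 1 ≤ d 0 ∨ 6 ≤ d 2 := by
      obtain ⟨e, he, hle⟩ := hB d hd
      rcases he with rfl | rfl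
      · exact Or.inl (Finsupp.single_le_iff.mp hle)
      · exact Or.inr (Finsupp.single_le_iff.mp hle)
    have hC' : 2 ≤ d 0 ∨ 2 ≤ d 1 ∨ 3 ≤ d 2 := by
      obtain ⟨e, he, hle⟩ := hC d hd
      rcases he with rfl | rfl | rfl
      · exact Or.inl (Finsupp.single_le_iff.mp hle)
      · exact Or.inr (Or.inl (Finsupp.single_le_iff.mp hle))
      · exact Or.inr (Or.inr (Finsupp.single_le_iff.mp hle))
    by_cases h1 : 2 ≤ d 0
    · exact ⟨E1, by simp, E1_le.mpr h1⟩
    · have hd1 : 1 ≤ d 1 := by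
        rcases hA' with h | h
        · exact absurd h h1
        · exact h
      rcases hB' with h0 | h6
      · rcases hC' with h | h | h
        · exact absurd h h1
        · exact ⟨E2, by simp, E2_le.mpr ⟨h0, h⟩⟩
        · exact ⟨E3, by simp, E3_le.mpr ⟨h0, hd1, h⟩⟩
      · exact ⟨E4, by simp, E4_le.mpr ⟨hd1, h6⟩⟩

end Inter

end StdBasisAux

/-- Let `S = k[x,y,z]` localized at `(x,y,z)`,
`I = (x² − y⁵, xy² + yz³ − z⁵)S`. Then the initial ideal `I*` in `P = k[X,Y,Z]` equals
`(X², XY², XYZ³, YZ⁶) = (X²,Y) ∩ (X,Z⁶) ∩ (X²,Y²,Z³)` (here `x = X 0`, `y = X 1`, `z = X 2`). -/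
theorem initial_ideal_eq (k : Type*) [Field k] :
    ∃ hP : (Ideal.span {X 0, X 1, X 2} : Ideal (MvPolynomial (Fin 3) k)).IsPrime,
      letI := hP
      let T := MvPolynomial (Fin 3) k
      let S := Localization.AtPrime (Ideal.span {X 0, X 1, X 2} : Ideal T)
      let I : Ideal S := (Ideal.span {(X 0) ^ 2 - (X 1) ^ 5,
        (X 0) * (X 1) ^ 2 + (X 1) * (X 2) ^ 3 - (X 2) ^ 5}).map (algebraMap T S)
      let Istar : Ideal T :=
        Ideal.span {g : T | ∃ f : T, f ≠ 0 ∧ algebraMap T S f ∈ I ∧ g = initForm f}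
      Istar = Ideal.span {(X 0) ^ 2, (X 0) * (X 1) ^ 2,
          (X 0) * (X 1) * (X 2) ^ 3, (X 1) * (X 2) ^ 6} ∧
        Istar = Ideal.span {(X 0) ^ 2, X 1} ⊓ Ideal.span {X 0, (X 2) ^ 6} ⊓
          Ideal.span {(X 0) ^ 2, (X 1) ^ 2, (X 2) ^ 3} := by
  classical
  open StdBasisAux in
  refine ⟨StdBasisAux.p_isPrime, ?_⟩
  intro T S I Istar
  letI : (Ideal.span {X 0, X 1, X 2} : Ideal (MvPolynomial (Fin 3) k)).IsPrime :=
    StdBasisAux.p_isPrime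
  have hmain : Istar = Ideal.span ({M1, M2, M3, M4} : Set T) := by
    apply le_antisymm
    · rw [Ideal.span_le]
      rintro g ⟨f, hf0, hfI, rfl⟩
      rw [← IsLocalization.mk'_one (M :=
        (Ideal.span {X 0, X 1, X 2} : Ideal (MvPolynomial (Fin 3) k)).primeCompl) S f,
        IsLocalization.mk'_mem_map_algebraMap_iff] at hfI
      obtain ⟨u, hu, huf⟩ := hfI
      have hcc : constantCoeff u ≠ 0 := fun h => hu (StdBasisAux.mem_p_iff.mpr h)
      have hkey := StdBasisAux.key (g := u * f) huf
      have heq : initForm f = C (constantCoeff u)⁻¹ * initForm (u * f) := by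
        rw [StdBasisAux.init_unit_mul hcc hf0, ← mul_assoc, ← C_mul, inv_mul_cancel₀ hcc,
          C_1, one_mul]
      rw [heq]
      exact Ideal.mul_mem_left _ _ hkey
    · rw [Ideal.span_le]
      rintro x (rfl | rfl | rfl | rfl)
      · exact Ideal.subset_span
          ⟨g1, g1_ne_zero, Ideal.mem_map_of_mem _ g1_memJ, init_g1.symm⟩
      · exact Ideal.subset_span
          ⟨g2, g2_ne_zero, Ideal.mem_map_of_mem _ g2_memJ, init_g2.symm⟩
      · exact Ideal.subset_span
          ⟨g3, g3_ne_zero, Ideal.mem_map_of_mem _ g3_memJ, init_g3.symm⟩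
      · exact Ideal.subset_span
          ⟨g4, g4_ne_zero, Ideal.mem_map_of_mem _ g4_memJ, init_g4.symm⟩
  exact ⟨hmain, hmain.trans StdBasisAux.inter_eq⟩
end
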